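/- Let m and d be positive integers and let z be a nonzero complex number that is a sum of d (not necessarily distinct) m-th roots of unity. Then |z| ≥ d^{1−φ(m)}, where φ is Euler's totient function. -/

import Mathlib

open Polynomial IntermediateField Finset

private lemma rou_isIntegral {m : ℕ} (hm : 0 < m) {R : Type*} [CommRing R] {x : R}
    (hx : x ^ m = 1) : IsIntegral ℤ x := by
  refine ⟨X ^ m - C 1, monic_X_pow_sub_C _ hm.ne', ?_⟩
  simp [eval₂, hx]

set_option maxHeartbeats 1000000 in
theorem small_sum_roots_of_unity (m d : ℕ) (hm : 0 < m) (hd : 0 < d)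
    (z : ℂ) (hz : z ≠ 0) (f : Fin d → ℂ) (hf : ∀ i, f i ^ m = 1)
    (hsum : z = ∑ i, f i) :
    (d : ℝ) ^ ((1 : ℤ) - (Nat.totient m : ℤ)) ≤ ‖z‖ := by
  classical
  set ζ : ℂ := Complex.exp (2 * Real.pi * Complex.I / m) with hζdef
  have hζ : IsPrimitiveRoot ζ m := Complex.isPrimitiveRoot_exp m hm.ne'
  have hζint : IsIntegral ℚ ζ := ((rou_isIntegral hm hζ.pow_eq_one).tower_top (A := ℚ))
  set K : IntermediateField ℚ ℂ := ℚ⟮ζ⟯ with hK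
  haveI : FiniteDimensional ℚ K := IntermediateField.adjoin.finiteDimensional hζint
  have hrank : Module.finrank ℚ K = Nat.totient m := by
    rw [IntermediateField.adjoin.finrank hζint, ← cyclotomic_eq_minpoly_rat hζ hm,
      natDegree_cyclotomic]
  -- the f i lie in K
  haveI : NeZero m := ⟨hm.ne'⟩
  have hmem : ∀ i, f i ∈ K := by
    intro i
    obtain ⟨k, -, hk⟩ := hζ.eq_pow_of_pow_eq_one (hf i)
    rw [← hk]
    exact pow_mem (IntermediateField.mem_adjoin_simple_self ℚ ζ) k
  set g : Fin d → K := fun i => ⟨f i, hmem i⟩ with hg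
  set w : K := ∑ i, g i with hw
  have hwz : (w : ℂ) = z := by
    rw [hsum, hw]
    push_cast
    rfl
  have hw0 : w ≠ 0 := by
    intro h
    apply hz
    rw [← hwz, h]; rfl
  have hgm : ∀ i, (g i) ^ m = 1 := by
    intro i
    ext
    push_cast
    exact hf i
  have hwint : IsIntegral ℤ w := IsIntegral.sum _ fun i _ => rou_isIntegral hm (hgm i)
  set N : ℚ := Algebra.norm ℚ w with hN
  have hN0 : N ≠ 0 := by
    rw [hN, Algebra.norm_ne_zero_iff]
    exact hw0
  have hNint : IsIntegral ℤ N := Algebra.isIntegral_norm ℚ hwint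
  obtain ⟨q, hq⟩ := IsIntegrallyClosed.isIntegral_iff.mp hNint
  have hq0 : q ≠ 0 := by rintro rfl; simp at hq; exact hN0 hq.symm
  have hq' : N = (q : ℚ) := by rw [← hq]; simp [algebraMap_int_eq]
  have hNabs : (1 : ℝ) ≤ |(N : ℝ)| := by
    rw [hq']
    push_cast
    rw [← Int.cast_abs]
    exact_mod_cast Int.one_le_abs hq0
  -- embeddings
  have hcard : Fintype.card (K →ₐ[ℚ] ℂ) = Nat.totient m := by
    rw [AlgHom.card, hrank]
  have hprod : (algebraMap ℚ ℂ) N = ∏ σ : K →ₐ[ℚ] ℂ, σ w :=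
    Algebra.norm_eq_prod_embeddings ℚ ℂ w
  have habs : |(N : ℝ)| = ∏ σ : K →ₐ[ℚ] ℂ, ‖σ w‖ := by
    have := congrArg (‖·‖) hprod
    rw [norm_prod] at this
    rw [← this, eq_ratCast (algebraMap ℚ ℂ),
      show ((N : ℂ)) = ((N : ℝ) : ℂ) by norm_cast, Complex.norm_real, Real.norm_eq_abs]
  -- bound each embedding
  have hbound : ∀ σ : K →ₐ[ℚ] ℂ, ‖σ w‖ ≤ d := by
    intro σ
    have : σ w = ∑ i, σ (g i) := map_sum σ g univ
    rw [this]
    calc ‖∑ i, σ (g i)‖ ≤ ∑ i, ‖σ (g i)‖ :=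
          norm_sum_le _ _
      _ ≤ ∑ _i : Fin d, (1 : ℝ) := by
          refine Finset.sum_le_sum fun i _ => ?_
          have h1 : (σ (g i)) ^ m = 1 := by rw [← map_pow, hgm i, map_one]
          have h2 : ‖σ (g i)‖ ^ m = 1 := by
            rw [← norm_pow, h1, norm_one]
          rcases (pow_eq_one_iff_cases.mp h2 : _) with h | h | h
          · omega
          · exact h.le
          · exfalso
            have := norm_nonneg (σ (g i))
            rw [h.1] at this; linarith
      _ = d := by simp
  set σ₀ : K →ₐ[ℚ] ℂ := K.val with hσ₀
  have hσ₀w : σ₀ w = z := hwz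
  have hφ1 : 1 ≤ Nat.totient m := (Nat.totient_pos.mpr hm)
  have key : (1 : ℝ) ≤ ‖z‖ * (d : ℝ) ^ (Nat.totient m - 1) := by
    calc (1 : ℝ) ≤ |(N : ℝ)| := hNabs
      _ = ∏ σ : K →ₐ[ℚ] ℂ, ‖σ w‖ := habs
      _ = ‖σ₀ w‖ * ∏ σ ∈ univ.erase σ₀, ‖σ w‖ :=
          (Finset.mul_prod_erase univ _ (mem_univ σ₀)).symm
      _ ≤ ‖σ₀ w‖ * (d : ℝ) ^ (univ.erase σ₀).card := by
          refine mul_le_mul_of_nonneg_left ?_ (norm_nonneg _)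
          calc ∏ σ ∈ univ.erase σ₀, ‖σ w‖
              ≤ ∏ _σ ∈ univ.erase σ₀, (d : ℝ) :=
                Finset.prod_le_prod (fun σ _ => norm_nonneg _) (fun σ _ => hbound σ)
            _ = (d : ℝ) ^ (univ.erase σ₀).card := Finset.prod_const _
      _ = ‖z‖ * (d : ℝ) ^ (Nat.totient m - 1) := by
          rw [hσ₀w, Finset.card_erase_of_mem (mem_univ σ₀), Finset.card_univ, hcard]
  have hdpos : (0 : ℝ) < (d : ℝ) ^ (Nat.totient m - 1) := by positivity
  have hfin : ((d : ℝ) ^ (Nat.totient m - 1))⁻¹ ≤ ‖z‖ := by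
    rw [inv_le_iff_one_le_mul₀ hdpos]
    exact key
  calc (d : ℝ) ^ ((1 : ℤ) - (Nat.totient m : ℤ))
      = ((d : ℝ) ^ (Nat.totient m - 1))⁻¹ := by
        rw [← zpow_natCast ((d : ℝ)) (Nat.totient m - 1), ← zpow_neg]
        congr 1
        omega
    _ ≤ ‖z‖ := hfin
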